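/- arXiv:1707.08346 — 7 statements merged into one kernel-verified Lean document; each statement's English description precedes it below -/
import Mathlib

section
/- Every uncountable algebraically closed field is ℵ₀-complete: if K is an uncountable algebraically closed field and S is a countable system of polynomial equations over K in countably many indeterminates such that every finite sub-system of S has a solution in K, then S has a solution in K. -/
/-- A field `K` is ℵ₀-complete if every countable system of polynomial equations over `K`
(in countably many indeterminates) has a solution in `K` whenever every finite
sub-system has a solution in `K`. -/
def Aleph0Complete (K : Type*) [Field K] : Prop :=
  ∀ S : ℕ → MvPolynomial ℕ K,
    (∀ T : Finset ℕ, ∃ x : ℕ → K, ∀ N ∈ T, MvPolynomial.eval x (S N) = 0) →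
    ∃ x : ℕ → K, ∀ N : ℕ, MvPolynomial.eval x (S N) = 0

/-- Every uncountable algebraically closed field is ℵ₀-complete. -/
theorem uncountable_algClosed_aleph0Complete (K : Type*) [Field K] [IsAlgClosed K]
    [Uncountable K] : Aleph0Complete K := by
  classical
  intro S hfin
  -- the ideal generated by the system
  set I : Ideal (MvPolynomial ℕ K) := Ideal.span (Set.range S) with hI
  -- I is a proper ideal
  have hItop : I ≠ ⊤ := by
    intro htop
    have h1 : (1 : MvPolynomial ℕ K) ∈ I := htop ▸ Submodule.mem_top
    rw [hI, Ideal.span, Submodule.mem_span_set'] at h1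
    obtain ⟨n, f, g, hg⟩ := h1
    choose N hN using fun i => (g i).2
    obtain ⟨x, hx⟩ := hfin (Finset.image N Finset.univ)
    have hz : ∀ i : Fin n, MvPolynomial.eval x ((g i : MvPolynomial ℕ K)) = 0 := by
      intro i
      rw [← hN i]
      exact hx (N i) (Finset.mem_image_of_mem N (Finset.mem_univ i))
    have := congrArg (MvPolynomial.eval x) hg
    simp only [map_sum, smul_eq_mul, map_mul, map_one] at this
    rw [Finset.sum_congr rfl (fun i _ => by rw [hz i, mul_zero])] at this
    simp at this
  -- a maximal ideal above I
  obtain ⟨m, hm, hIm⟩ := Ideal.exists_le_maximal I hItop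
  letI : Field (MvPolynomial ℕ K ⧸ m) := Ideal.Quotient.field m
  -- the quotient field has countable rank over K
  have hrank : Module.rank K (MvPolynomial ℕ K ⧸ m) ≤ Cardinal.aleph0 := by
    refine le_trans (rank_quotient_le (Submodule.restrictScalars K m)) ?_
    rw [MvPolynomial.rank_eq_lift]
    simp [Cardinal.lift_le_aleph0, Cardinal.mk_le_aleph0]
  -- hence it is algebraic over K
  haveI : NoZeroSMulDivisors K (MvPolynomial ℕ K ⧸ m) :=
    inferInstance
  haveI halg : Algebra.IsAlgebraic K (MvPolynomial ℕ K ⧸ m) := by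
    constructor
    intro z
    by_contra hz
    have ht : Transcendental K z := hz
    have hli := ht.linearIndependent_sub_inv
    have := hli.cardinal_le_rank
    have hK : (Cardinal.mk K) ≤ Cardinal.aleph0 := le_trans this hrank
    exact (Cardinal.aleph0_lt_mk (α := K)).not_ge hK
  -- embed the quotient into K over K
  let φ : (MvPolynomial ℕ K ⧸ m) →ₐ[K] K := IsAlgClosed.lift
  let ψ : MvPolynomial ℕ K →ₐ[K] K := φ.comp (Ideal.Quotient.mkₐ K m)
  refine ⟨fun n => ψ (MvPolynomial.X n), fun N => ?_⟩
  have hψ : ψ = MvPolynomial.aeval (fun n => ψ (MvPolynomial.X n)) :=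
    MvPolynomial.aeval_unique ψ
  have : MvPolynomial.aeval (R := K) (fun n => ψ (MvPolynomial.X n)) (S N) = 0 := by
    rw [← hψ]
    have hmem : S N ∈ m := hIm (Ideal.subset_span ⟨N, rfl⟩)
    show φ (Ideal.Quotient.mkₐ K m (S N)) = 0
    rw [show Ideal.Quotient.mkₐ K m (S N) = 0 from (Ideal.Quotient.eq_zero_iff_mem).2 hmem,
      map_zero]
  rw [← MvPolynomial.coe_aeval_eq_eval]
  exact this
end

section
/- If K is an infinite field and x = (x₁, ..., xₙ), then the field extension K → K(x₁, ..., xₙ) of K into the field of rational functions in n variables is algebraically pure. -/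
/-- A morphism of fields `φ : K →+* L` is algebraically pure if every finite system of
polynomial equations with coefficients in `K` having a solution in `L` has a solution in `K`. -/
def AlgebraicallyPure {K L : Type*} [Field K] [Field L] (φ : K →+* L) : Prop :=
  ∀ (m r : ℕ) (f : Fin r → MvPolynomial (Fin m) K),
    (∃ y : Fin m → L, ∀ k, MvPolynomial.eval y (MvPolynomial.map φ (f k)) = 0) →
    ∃ y : Fin m → K, ∀ k, MvPolynomial.eval y (f k) = 0

set_option maxHeartbeats 1000000 in
set_option synthInstance.maxHeartbeats 400000 in
/-- If `K` is an infinite field, the extension `K → K(x₁,…,xₙ)` into the field of rational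
functions in `n` variables is algebraically pure. -/
theorem rationalFunctionField_algebraicallyPure (K : Type*) [Field K] [Infinite K] (n : ℕ) :
    AlgebraicallyPure (algebraMap K (FractionRing (MvPolynomial (Fin n) K))) := by
  classical
  intro m r f hf
  set A := MvPolynomial (Fin n) K with hA
  set F := FractionRing A with hF
  obtain ⟨y, hy⟩ := hf
  -- write each `y i` as a fraction `p i / q i`
  have hsurj : ∀ i, ∃ (x : A) (s : nonZeroDivisors A),
      IsLocalization.mk' F x s = y i := fun i => by
    obtain ⟨⟨x, s⟩, h⟩ := IsLocalization.mk'_surjective (nonZeroDivisors A) (y i)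
    exact ⟨x, s, h⟩
  choose p q hpq using hsurj
  -- the common denominator
  set Q : A := ∏ i, (q i : A) with hQdef
  have hq0 : ∀ i, (q i : A) ≠ 0 := fun i => nonZeroDivisors.ne_zero (q i).2
  have hQ0 : Q ≠ 0 := Finset.prod_ne_zero_iff.mpr fun i _ => hq0 i
  -- a point where the denominator does not vanish
  obtain ⟨a, ha⟩ : ∃ a : Fin n → K, MvPolynomial.eval a Q ≠ 0 := by
    by_contra h
    push_neg at h
    exact hQ0 (MvPolynomial.funext fun x => by simp [h x])
  -- the localization away from `Q`
  set S := Localization.Away Q with hS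
  have hgj : ∀ s : Submonoid.powers Q, IsUnit (algebraMap A F (s : A)) := by
    rintro ⟨s, k, rfl⟩
    rw [isUnit_iff_ne_zero]
    intro h
    exact pow_ne_zero k hQ0 (IsFractionRing.injective A F (by rwa [map_zero]))
  have hgθ : ∀ s : Submonoid.powers Q, IsUnit (MvPolynomial.eval a (s : A)) := by
    rintro ⟨s, k, rfl⟩
    rw [isUnit_iff_ne_zero, map_pow]
    exact pow_ne_zero _ ha
  let j : S →+* F := IsLocalization.lift (M := Submonoid.powers Q) hgj
  let θ : S →+* K := IsLocalization.lift (M := Submonoid.powers Q) hgθ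
  have hjA : ∀ x : A, j (algebraMap A S x) = algebraMap A F x := fun x =>
    IsLocalization.lift_eq hgj x
  have hθA : ∀ x : A, θ (algebraMap A S x) = MvPolynomial.eval a x := fun x =>
    IsLocalization.lift_eq hgθ x
  -- `j` is injective
  have hjinj : Function.Injective j := by
    intro s t hst
    rw [← sub_eq_zero]
    rw [← sub_eq_zero, ← RingHom.map_sub] at hst
    obtain ⟨⟨x, u⟩, hxu⟩ := IsLocalization.mk'_surjective (Submonoid.powers Q) (s - t)
    change IsLocalization.mk' S x u = s - t at hxu
    rw [← hxu] at hst ⊢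
    have hx : algebraMap A F x = algebraMap A F (u : A) * 0 :=
      (IsLocalization.lift_mk'_spec _ _ _ _).mp hst
    rw [mul_zero] at hx
    have : x = 0 := IsFractionRing.injective A F (by rwa [map_zero])
    rw [this, IsLocalization.mk'_zero]
  -- lift the solution `y` to `S`
  have hQmem : Q ∈ Submonoid.powers Q := ⟨1, pow_one Q⟩
  set Y : Fin m → S := fun i =>
    IsLocalization.mk' S (p i * ∏ l ∈ Finset.univ.erase i, (q l : A)) ⟨Q, hQmem⟩ with hYdef
  have hjY : ∀ i, j (Y i) = y i := by
    intro i
    rw [hYdef]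
    rw [IsLocalization.lift_mk'_spec]
    have hQi : (q i : A) * ∏ l ∈ Finset.univ.erase i, (q l : A) = Q := by
      rw [hQdef]
      exact Finset.mul_prod_erase Finset.univ (fun l => (q l : A)) (Finset.mem_univ i)
    have hspec : y i * algebraMap A F (q i : A) = algebraMap A F (p i) := by
      rw [← hpq i]; exact IsLocalization.mk'_spec F (p i) (q i)
    calc algebraMap A F (p i * ∏ l ∈ Finset.univ.erase i, (q l : A))
        = algebraMap A F (p i) * algebraMap A F (∏ l ∈ Finset.univ.erase i, (q l : A)) := by
          rw [map_mul]
      _ = (y i * algebraMap A F (q i : A)) *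
            algebraMap A F (∏ l ∈ Finset.univ.erase i, (q l : A)) := by rw [hspec]
      _ = algebraMap A F ((q i : A) * ∏ l ∈ Finset.univ.erase i, (q l : A)) * y i := by
          rw [map_mul]; ring
      _ = algebraMap A F Q * y i := by rw [hQi]
  -- key: the system has a solution in `S`
  have key : ∀ k, MvPolynomial.eval₂ ((algebraMap A S).comp MvPolynomial.C) Y (f k) = 0 := by
    intro k
    apply hjinj
    rw [map_zero, MvPolynomial.eval₂_comp_left j]
    have h1 : j.comp ((algebraMap A S).comp MvPolynomial.C)
        = algebraMap K F := by
      rw [← RingHom.comp_assoc, IsLocalization.lift_comp]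
      rw [IsScalarTower.algebraMap_eq K A F]
      rfl
    rw [h1]
    have h2 : (j ∘ Y) = y := funext hjY
    rw [h2, ← MvPolynomial.eval_map]
    exact hy k
  -- push the solution down to `K` via evaluation at `a`
  refine ⟨θ ∘ Y, fun k => ?_⟩
  have := congrArg θ (key k)
  rw [map_zero, MvPolynomial.eval₂_comp_left θ] at this
  have h3 : θ.comp ((algebraMap A S).comp MvPolynomial.C) = RingHom.id K := by
    rw [← RingHom.comp_assoc, IsLocalization.lift_comp]
    ext c
    exact MvPolynomial.eval_C c
  rw [h3, MvPolynomial.eval₂_id] at this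
  exact this
end

section
/- Let K be an ℵ₀-complete field, x = (x₁,...,xₙ), Y = (Y₁,...,Y_m), f = (f₁,...,f_r) ∈ K[[x]][Y]^r, and J_i ⊆ {1,...,n} for each i ∈ {1,...,m}. If for every c ∈ ℕ there exists y^(c) ∈ K[[x]]^m with y^(c)_i ∈ K[[x_{J_i}]] for every i and f(y^(c)) ≡ 0 modulo (x)^c, then there exists y ∈ K[[x]]^m with y_i ∈ K[[x_{J_i}]] for every i and f(y) = 0. -/
set_option maxHeartbeats 1000000


/-- `g ∈ K[[x_J]]`: the power series `g` only involves the variables `x_j` for `j ∈ J`. -/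
def DependsOnVars {K : Type*} [Field K] {n : ℕ} (J : Set (Fin n)) (g : MvPowerSeries (Fin n) K) : Prop :=
  ∀ α : Fin n →₀ ℕ, ¬ (↑α.support ⊆ J) → MvPowerSeries.coeff α g = 0

/-- `OrdGE g c` means `ord g ≥ c`, i.e. `g ∈ (x)^c`. -/
def OrdGE {K : Type*} [Field K] {n : ℕ} (g : MvPowerSeries (Fin n) K) (c : ℕ) : Prop :=
  ∀ α : Fin n →₀ ℕ, (∑ j, α j) < c → MvPowerSeries.coeff α g = 0

/-- `OrdEq g c` means `ord g = c` exactly. -/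
def OrdEq {K : Type*} [Field K] {n : ℕ} (g : MvPowerSeries (Fin n) K) (c : ℕ) : Prop :=
  OrdGE g c ∧ ¬ OrdGE g (c + 1)

noncomputable section ApproxAux

namespace ApproxAux

variable {K : Type*} [Field K] {n m r : ℕ}

/-- Assemble a family of power series from an assignment of coefficients. -/
def assemble (n m : ℕ) {K : Type*} [Field K] (z : Fin m × (Fin n →₀ ℕ) → K) :
    Fin m → MvPowerSeries (Fin n) K := fun i β => z (i, β)

/-- The "generic" power series whose coefficients are indeterminates. -/
def genY (n m : ℕ) (K : Type*) [Field K] :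
    Fin m → MvPowerSeries (Fin n) (MvPolynomial (Fin m × (Fin n →₀ ℕ)) K) :=
  fun i β => MvPolynomial.X (i, β)

/-- The polynomial (in the coefficient indeterminates) expressing the coefficient of `x^α`
in `f k` evaluated at the generic power series. -/
def P (f : Fin r → MvPolynomial (Fin m) (MvPowerSeries (Fin n) K)) (k : Fin r)
    (α : Fin n →₀ ℕ) : MvPolynomial (Fin m × (Fin n →₀ ℕ)) K :=
  MvPowerSeries.coeff α
    (MvPolynomial.eval₂ (MvPowerSeries.map (σ := Fin n) (MvPolynomial.C)) (genY n m K) (f k))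

lemma eval_P (f : Fin r → MvPolynomial (Fin m) (MvPowerSeries (Fin n) K)) (k : Fin r)
    (α : Fin n →₀ ℕ) (z : Fin m × (Fin n →₀ ℕ) → K) :
    MvPolynomial.eval z (P f k α) =
      MvPowerSeries.coeff α (MvPolynomial.eval (assemble n m z) (f k)) := by
  have key : (MvPowerSeries.map (σ := Fin n) (MvPolynomial.eval z))
        (MvPolynomial.eval₂ (MvPowerSeries.map (σ := Fin n) MvPolynomial.C) (genY n m K) (f k))
      = MvPolynomial.eval (assemble n m z) (f k) := by
    rw [MvPolynomial.eval₂_comp_left]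
    have h1 : (MvPowerSeries.map (σ := Fin n) (MvPolynomial.eval z)).comp
        (MvPowerSeries.map (σ := Fin n) MvPolynomial.C) = RingHom.id _ := by
      rw [← MvPowerSeries.map_comp]
      have h0 : (MvPolynomial.eval z).comp
          (MvPolynomial.C : K →+* MvPolynomial (Fin m × (Fin n →₀ ℕ)) K) = RingHom.id K := by
        ext a; simp
      rw [h0, MvPowerSeries.map_id]
    have h2 : (⇑(MvPowerSeries.map (σ := Fin n) (MvPolynomial.eval z))) ∘ genY n m K
        = assemble n m z := by
      funext i
      apply MvPowerSeries.ext
      intro β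
      rw [Function.comp_apply, MvPowerSeries.coeff_map]
      simp [genY, assemble, MvPowerSeries.coeff_apply]
    rw [h1, h2, MvPolynomial.eval₂_id]
  rw [P, ← key, MvPowerSeries.coeff_map]

end ApproxAux

end ApproxAux

/-- Approximation with constraints over an ℵ₀-complete field: if the system `f = 0`
(with coefficients in `K[[x]]`) has, for every `c`, an approximate solution modulo `(x)^c`
whose `i`-th component lies in `K[[x_{J_i}]]`, then it has an exact solution with the same
constraints. -/
theorem approximation_with_constraints {K : Type*} [Field K] (hK : Aleph0Complete K)
    (n m r : ℕ) (f : Fin r → MvPolynomial (Fin m) (MvPowerSeries (Fin n) K))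
    (J : Fin m → Set (Fin n))
    (h : ∀ c : ℕ, ∃ y : Fin m → MvPowerSeries (Fin n) K,
      (∀ i, DependsOnVars (J i) (y i)) ∧ ∀ k, OrdGE (MvPolynomial.eval y (f k)) c) :
    ∃ y : Fin m → MvPowerSeries (Fin n) K,
      (∀ i, DependsOnVars (J i) (y i)) ∧ ∀ k, MvPolynomial.eval y (f k) = 0 := by
  classical
  -- equation index type
  let E := (Fin r × (Fin n →₀ ℕ)) ⊕ (Fin m × (Fin n →₀ ℕ))
  let ι : (Fin m × (Fin n →₀ ℕ)) → ℕ := Encodable.encode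
  have hι : Function.Injective ι := Encodable.encode_injective
  -- the system of polynomial equations, over variables `Fin m × (Fin n →₀ ℕ)`
  let Q : E → MvPolynomial (Fin m × (Fin n →₀ ℕ)) K := fun e =>
    match e with
    | Sum.inl (k, α) => ApproxAux.P f k α
    | Sum.inr (i, α) => if (↑α.support ⊆ J i) then 0 else MvPolynomial.X (i, α)
  -- reindexed over `ℕ`
  let S : ℕ → MvPolynomial ℕ K := fun N =>
    match (Encodable.decode (α := E) N) with
    | some e => MvPolynomial.rename ι (Q e)
    | none => 0
  have hS : ∀ e : E, S (Encodable.encode e) = MvPolynomial.rename ι (Q e) := by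
    intro e
    simp only [S, Encodable.encodek]
  -- every finite subsystem has a solution
  have hfin : ∀ T : Finset ℕ, ∃ x : ℕ → K, ∀ N ∈ T, MvPolynomial.eval x (S N) = 0 := by
    intro T
    set w : ℕ → ℕ := fun N =>
      match (Encodable.decode (α := E) N) with
      | some (Sum.inl (_, α)) => (∑ j, α j) + 1
      | _ => 0 with hw
    set c : ℕ := T.sup w with hc
    obtain ⟨y, hy1, hy2⟩ := h c
    set z : Fin m × (Fin n →₀ ℕ) → K := fun p => MvPowerSeries.coeff p.2 (y p.1) with hz
    have hassemble : ApproxAux.assemble n m z = y := by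
      funext i
      apply MvPowerSeries.ext
      intro β
      simp [ApproxAux.assemble, hz, MvPowerSeries.coeff_apply]
    refine ⟨Function.extend ι z 0, ?_⟩
    intro N hN
    have hext : (Function.extend ι z 0) ∘ ι = z := by
      funext p; exact hι.extend_apply z 0 p
    rcases hd : Encodable.decode (α := E) N with _ | e
    · simp [S, hd]
    · have : S N = MvPolynomial.rename ι (Q e) := by simp only [S, hd]
      rw [this, MvPolynomial.eval_rename, hext]
      rcases e with ⟨k, α⟩ | ⟨i, α⟩
      · -- main equation: approximate solution kills it
        have hwN : w N = (∑ j, α j) + 1 := by simp only [hw, hd]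
        have hlt : (∑ j, α j) < c := by
          have := Finset.le_sup (f := w) hN
          omega
        have : MvPolynomial.eval z (Q (Sum.inl (k, α))) =
            MvPowerSeries.coeff α (MvPolynomial.eval y (f k)) := by
          show MvPolynomial.eval z (ApproxAux.P f k α) = _
          rw [ApproxAux.eval_P, hassemble]
        rw [this]
        exact hy2 k α hlt
      · -- constraint equation
        by_cases hsub : (↑α.support ⊆ J i)
        · have : Q (Sum.inr (i, α)) = 0 := by simp [Q, hsub]
          rw [this]; simp
        · have : Q (Sum.inr (i, α)) = MvPolynomial.X (i, α) := by simp [Q, hsub]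
          rw [this, MvPolynomial.eval_X]
          exact hy1 i α hsub
  -- apply ℵ₀-completeness
  obtain ⟨x, hx⟩ := hK S hfin
  set z : Fin m × (Fin n →₀ ℕ) → K := x ∘ ι with hz
  refine ⟨ApproxAux.assemble n m z, ?_, ?_⟩
  · intro i α hα
    have h0 := hx (Encodable.encode (Sum.inr (i, α) : E))
    rw [hS, MvPolynomial.eval_rename] at h0
    have hQ : Q (Sum.inr (i, α)) = MvPolynomial.X (i, α) := by simp [Q, hα]
    rw [hQ, MvPolynomial.eval_X] at h0
    simpa [ApproxAux.assemble, MvPowerSeries.coeff_apply, hz] using h0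
  · intro k
    apply MvPowerSeries.ext
    intro α
    have h0 := hx (Encodable.encode (Sum.inl (k, α) : E))
    rw [hS, MvPolynomial.eval_rename] at h0
    have hQ : Q (Sum.inl (k, α)) = ApproxAux.P f k α := rfl
    rw [hQ, ApproxAux.eval_P] at h0
    simpa using h0
end

section
/- Moreover, in the setting of Theorem on approximation over algebraically pure extensions, the solution y ∈ K[[x]]^m can be chosen so that the support of each y_i is contained in the support of ŷ_i, i.e., every monomial appearing in y_i with nonzero coefficient appears with nonzero coefficient in ŷ_i. -/
set_option maxHeartbeats 1000000

open MvPolynomial MvPowerSeries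

namespace ApproxAux

variable {K K' : Type*} [CommRing K] [CommRing K'] {n m : ℕ}

/-- The generic power series whose coefficients are indeterminates. -/
noncomputable def genSeries (K : Type*) [CommRing K] (n m : ℕ) (i : Fin m) :
    MvPowerSeries (Fin n) (MvPolynomial (Fin m × (Fin n →₀ ℕ)) K) :=
  fun β => MvPolynomial.X (i, β)

noncomputable def Phi (K : Type*) [CommRing K] (n m : ℕ) :
    MvPolynomial (Fin m) (MvPowerSeries (Fin n) K) →+*
      MvPowerSeries (Fin n) (MvPolynomial (Fin m × (Fin n →₀ ℕ)) K) :=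
  MvPolynomial.eval₂Hom (MvPowerSeries.map MvPolynomial.C) (genSeries K n m)

/-- The polynomial over `K` expressing the coefficient of `x^α` in `f(y)` in terms of the
coefficients of the `y_i`. -/
noncomputable def Ecoeff (f : MvPolynomial (Fin m) (MvPowerSeries (Fin n) K))
    (α : Fin n →₀ ℕ) : MvPolynomial (Fin m × (Fin n →₀ ℕ)) K :=
  MvPowerSeries.coeff α (Phi K n m f)

theorem coeff_eval (f : MvPolynomial (Fin m) (MvPowerSeries (Fin n) K))
    (y : Fin m → MvPowerSeries (Fin n) K) (α : Fin n →₀ ℕ) :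
    MvPowerSeries.coeff α (MvPolynomial.eval y f) =
      MvPolynomial.eval (fun p => MvPowerSeries.coeff p.2 (y p.1)) (Ecoeff f α) := by
  set ev : MvPolynomial (Fin m × (Fin n →₀ ℕ)) K →+* K :=
    MvPolynomial.eval (fun p => MvPowerSeries.coeff p.2 (y p.1)) with hev
  have key : (MvPowerSeries.map ev).comp (Phi K n m) =
      MvPolynomial.eval₂Hom (RingHom.id _) y := by
    apply MvPolynomial.ringHom_ext
    · intro s
      simp only [RingHom.comp_apply, Phi, eval₂Hom_C, eval₂Hom_C, RingHom.id_apply]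
      apply MvPowerSeries.ext
      intro β
      simp [MvPowerSeries.coeff_map, hev]
    · intro i
      simp only [RingHom.comp_apply, Phi, eval₂Hom_X']
      apply MvPowerSeries.ext
      intro β
      show ev (MvPolynomial.X (i, β)) = MvPowerSeries.coeff β (y i)
      simp [hev]
  have h0 : MvPolynomial.eval y f = (MvPowerSeries.map ev) (Phi K n m f) :=
    (RingHom.congr_fun key f).symm
  rw [h0, MvPowerSeries.coeff_map]
  rfl

theorem map_Ecoeff (φ : K →+* K') (f : MvPolynomial (Fin m) (MvPowerSeries (Fin n) K))
    (α : Fin n →₀ ℕ) :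
    MvPolynomial.map φ (Ecoeff f α) =
      Ecoeff (MvPolynomial.map (MvPowerSeries.map φ) f) α := by
  have key : (MvPowerSeries.map (MvPolynomial.map φ)).comp (Phi K n m) =
      (Phi K' n m).comp (MvPolynomial.map (MvPowerSeries.map φ)) := by
    apply MvPolynomial.ringHom_ext
    · intro s
      simp only [RingHom.comp_apply, Phi, eval₂Hom_C, MvPolynomial.map_C]
      apply MvPowerSeries.ext
      intro β
      simp [MvPowerSeries.coeff_map]
    · intro i
      simp only [RingHom.comp_apply, Phi, eval₂Hom_X', MvPolynomial.map_X]
      apply MvPowerSeries.ext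
      intro β
      show MvPolynomial.map φ (MvPolynomial.X (i, β)) = MvPolynomial.X (i, β)
      simp
  have := RingHom.congr_fun key f
  simp only [RingHom.comp_apply] at this
  unfold Ecoeff
  rw [← MvPowerSeries.coeff_map, this]

theorem eval_congr_vars {σ R : Type*} [CommSemiring R] {g₁ g₂ : σ → R} {p : MvPolynomial σ R}
    (h : ∀ v ∈ p.vars, g₁ v = g₂ v) : MvPolynomial.eval g₁ p = MvPolynomial.eval g₂ p :=
  MvPolynomial.eval₂Hom_congr' rfl (fun i h1 _ => h i h1) rfl

end ApproxAux



/-- In the setting of approximation over algebraically pure extensions, the solution `y`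
over `K` can be chosen so that the support of each `y_i` is contained in the support of
`yh_i`. -/
theorem approximation_support_contained {K K' : Type*} [Field K] [Field K'] (φ : K →+* K')
    (hpure : AlgebraicallyPure φ) (hK : Aleph0Complete K)
    (n m r : ℕ) (f : Fin r → MvPolynomial (Fin m) (MvPowerSeries (Fin n) K))
    (yh : Fin m → MvPowerSeries (Fin n) K')
    (hsol : ∀ k, MvPolynomial.eval yh
      (MvPolynomial.map (MvPowerSeries.map φ) (f k)) = 0) :
    ∃ y : Fin m → MvPowerSeries (Fin n) K,
      (∀ k, MvPolynomial.eval y (f k) = 0) ∧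
      (∀ i (α : Fin n →₀ ℕ),
        MvPowerSeries.coeff α (y i) ≠ 0 → MvPowerSeries.coeff α (yh i) ≠ 0) := by
  classical
  -- encoding of the variable indices
  let enc : Fin m × (Fin n →₀ ℕ) → ℕ := Encodable.encode
  -- the system of polynomial equations on the coefficients
  let P : (Fin r × (Fin n →₀ ℕ)) ⊕ (Fin m × (Fin n →₀ ℕ)) →
      MvPolynomial (Fin m × (Fin n →₀ ℕ)) K :=
    Sum.elim (fun q => ApproxAux.Ecoeff (f q.1) q.2)
      (fun p => if MvPowerSeries.coeff p.2 (yh p.1) = 0 then MvPolynomial.X p else 0)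
  let S : ℕ → MvPolynomial ℕ K := fun N =>
    (Encodable.decode (α := (Fin r × (Fin n →₀ ℕ)) ⊕ (Fin m × (Fin n →₀ ℕ))) N).elim 0
      (fun idx => MvPolynomial.rename enc (P idx))
  -- the coefficients of yh as an assignment over K'
  let w' : ℕ → K' := fun v =>
    (Encodable.decode (α := Fin m × (Fin n →₀ ℕ)) v).elim 0
      (fun p => MvPowerSeries.coeff p.2 (yh p.1))
  have hwenc : ∀ p : Fin m × (Fin n →₀ ℕ), w' (enc p) = MvPowerSeries.coeff p.2 (yh p.1) := by
    intro p
    show (Encodable.decode (Encodable.encode p)).elim 0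
      (fun p : Fin m × (Fin n →₀ ℕ) => MvPowerSeries.coeff p.2 (yh p.1)) = _
    rw [Encodable.encodek]
    rfl
  have hP' : ∀ idx, MvPolynomial.eval (fun p : Fin m × (Fin n →₀ ℕ) =>
      MvPowerSeries.coeff p.2 (yh p.1)) (MvPolynomial.map φ (P idx)) = 0 := by
    rintro (⟨k, α⟩ | ⟨i, α⟩)
    · show MvPolynomial.eval _ (MvPolynomial.map φ (ApproxAux.Ecoeff (f k) α)) = 0
      rw [ApproxAux.map_Ecoeff, ← ApproxAux.coeff_eval, hsol k, map_zero]
    · show MvPolynomial.eval _ (MvPolynomial.map φ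
        (if MvPowerSeries.coeff α (yh i) = 0 then MvPolynomial.X (i, α) else 0)) = 0
      by_cases h0 : MvPowerSeries.coeff α (yh i) = 0
      · rw [if_pos h0]; simpa using h0
      · rw [if_neg h0]; simp
  have hS' : ∀ N, MvPolynomial.eval w' (MvPolynomial.map φ (S N)) = 0 := by
    intro N
    show MvPolynomial.eval w' (MvPolynomial.map φ
      ((Encodable.decode N).elim 0 (fun idx => MvPolynomial.rename enc (P idx)))) = 0
    cases hdec : (Encodable.decode (α := (Fin r × (Fin n →₀ ℕ)) ⊕ (Fin m × (Fin n →₀ ℕ))) N) with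
    | none => simp
    | some idx =>
      simp only [Option.elim]
      rw [MvPolynomial.map_rename, MvPolynomial.eval_rename]
      have : (w' ∘ enc) = fun p : Fin m × (Fin n →₀ ℕ) =>
          MvPowerSeries.coeff p.2 (yh p.1) := funext hwenc
      rw [this]
      exact hP' idx
  -- every finite subsystem has a solution over K
  have hfin : ∀ T : Finset ℕ, ∃ x : ℕ → K, ∀ N ∈ T, MvPolynomial.eval x (S N) = 0 := by
    intro T
    set V : Finset ℕ := T.sup fun N => (S N).vars with hV
    have hVsub : ∀ N ∈ T, (S N).vars ⊆ V := fun N hN v hv =>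
      Finset.mem_sup.mpr ⟨N, hN, hv⟩
    set M := Fintype.card {x // x ∈ V} with hM
    set R' := Fintype.card {x // x ∈ T} with hR'
    set eV : {x // x ∈ V} ≃ Fin M := Fintype.equivFin _ with heV
    set eT : {x // x ∈ T} ≃ Fin R' := Fintype.equivFin _ with heT
    set gV : ℕ → Fin (M + 1) := fun v => if h : v ∈ V then (eV ⟨v, h⟩).succ else 0 with hgV
    set g : Fin R' → MvPolynomial (Fin (M + 1)) K :=
      fun j => MvPolynomial.rename gV (S ((eT.symm j : {x // x ∈ T}) : ℕ)) with hg
    set y' : Fin (M + 1) → K' := fun a => Fin.cases 0 (fun b => w' ((eV.symm b : {x // x ∈ V}) : ℕ)) a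
      with hy'
    have hy'g : ∀ v ∈ V, y' (gV v) = w' v := by
      intro v hv
      have : gV v = (eV ⟨v, hv⟩).succ := dif_pos hv
      rw [this, hy']
      simp
    have hsolK' : ∃ y'' : Fin (M + 1) → K',
        ∀ j, MvPolynomial.eval y'' (MvPolynomial.map φ (g j)) = 0 := by
      refine ⟨y', fun j => ?_⟩
      rw [hg]
      rw [MvPolynomial.map_rename, MvPolynomial.eval_rename]
      set N : ℕ := ((eT.symm j : {x // x ∈ T}) : ℕ) with hN
      have hNT : N ∈ T := (eT.symm j).2
      have hvars : ∀ v ∈ (MvPolynomial.map φ (S N)).vars, (y' ∘ gV) v = w' v := by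
        intro v hvv
        exact hy'g v (hVsub N hNT (MvPolynomial.vars_map (S N) φ hvv))
      rw [ApproxAux.eval_congr_vars hvars]
      exact hS' N
    obtain ⟨z, hz⟩ := hpure (M + 1) R' g hsolK'
    refine ⟨z ∘ gV, fun N hN => ?_⟩
    have := hz (eT ⟨N, hN⟩)
    rw [hg] at this
    simp only [Equiv.symm_apply_apply] at this
    rw [MvPolynomial.eval_rename] at this
    exact this
  -- glue with ℵ₀-completeness
  obtain ⟨w, hw⟩ := hK S hfin
  refine ⟨fun i => (fun α => w (enc (i, α)) : MvPowerSeries (Fin n) K), ?_, ?_⟩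
  · intro k
    apply MvPowerSeries.ext
    intro α
    have h1 := ApproxAux.coeff_eval (f k)
      (fun i => (fun α => w (enc (i, α)) : MvPowerSeries (Fin n) K)) α
    have h2 : (fun p : Fin m × (Fin n →₀ ℕ) => MvPowerSeries.coeff p.2
        ((fun i => (fun α => w (enc (i, α)) : MvPowerSeries (Fin n) K)) p.1)) = w ∘ enc := by
      funext p; rfl
    have h3 := hw (Encodable.encode (Sum.inl (k, α) :
      (Fin r × (Fin n →₀ ℕ)) ⊕ (Fin m × (Fin n →₀ ℕ))))
    have h4 : S (Encodable.encode (Sum.inl (k, α) :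
        (Fin r × (Fin n →₀ ℕ)) ⊕ (Fin m × (Fin n →₀ ℕ)))) =
        MvPolynomial.rename enc (ApproxAux.Ecoeff (f k) α) := by
      show (Encodable.decode (Encodable.encode _)).elim 0 _ = _
      rw [Encodable.encodek]
      rfl
    rw [h4, MvPolynomial.eval_rename] at h3
    rw [h1, h2, map_zero]
    exact h3
  · intro i α hne
    intro h0
    apply hne
    have h3 := hw (Encodable.encode (Sum.inr (i, α) :
      (Fin r × (Fin n →₀ ℕ)) ⊕ (Fin m × (Fin n →₀ ℕ))))
    have h4 : S (Encodable.encode (Sum.inr (i, α) :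
        (Fin r × (Fin n →₀ ℕ)) ⊕ (Fin m × (Fin n →₀ ℕ)))) =
        MvPolynomial.rename enc (MvPolynomial.X (i, α)) := by
      show (Encodable.decode (Encodable.encode _)).elim 0 _ = _
      rw [Encodable.encodek]
      simp only [Option.elim, P, Sum.elim_inr, if_pos h0]
    rw [h4, MvPolynomial.rename_X] at h3
    simp at h3
    exact h3
end

section
/- Strong approximation with constraints: Let K be an ℵ₀-complete field, x = (x₁,...,xₙ), f ∈ K[[x]][Y]^r with Y = (Y₁,...,Y_m), and J_i ⊆ {1,...,n} for i ∈ {1,...,m}. Then there exists a map ν : ℕ^m → ℕ such that for every c = (c₁,...,c_m) ∈ ℕ^m: if y' = (y'₁,...,y'_m) with y'_i ∈ K[[x_{J_i}]] satisfies f(y') ≡ 0 modulo (x)^{ν(c)} and ord(y'_i) = c_i for all i, then there exists y = (y₁,...,y_m) with y_i ∈ K[[x_{J_i}]], f(y) = 0, and ord(y_i) = c_i for all i. -/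
open MvPolynomial

noncomputable section SAAux
namespace SAAux

variable {K : Type*} [Field K] {n m r : ℕ}

abbrev V (n m : ℕ) := (Fin m × (Fin n →₀ ℕ)) ⊕ (Fin m × (Fin n →₀ ℕ))

abbrev E (n m r : ℕ) :=
  Option ((Fin m × (Fin n →₀ ℕ)) ⊕ ((Fin m × (Fin n →₀ ℕ)) ⊕ (Fin m ⊕ (Fin r × (Fin n →₀ ℕ)))))

def degSet (n d : ℕ) : Finset (Fin n →₀ ℕ) :=
  (Finset.Iic (Finsupp.equivFunOnFinite.symm fun _ => d)).filter (fun α => ∑ j, α j = d)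

lemma mem_degSet {d : ℕ} {α : Fin n →₀ ℕ} : α ∈ degSet n d ↔ (∑ j, α j = d) := by
  constructor
  · intro h; exact (Finset.mem_filter.mp h).2
  · intro h
    refine Finset.mem_filter.mpr ⟨Finset.mem_Iic.mpr ?_, h⟩
    intro j
    simp only [Finsupp.equivFunOnFinite_symm_apply_apply]
    calc α j ≤ ∑ j', α j' := Finset.single_le_sum (fun _ _ => Nat.zero_le _) (Finset.mem_univ j)
    _ = d := h

def genY (K : Type*) [Field K] (n m : ℕ) (i : Fin m) :
    MvPowerSeries (Fin n) (MvPolynomial (V n m) K) :=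
  fun α => MvPolynomial.X (Sum.inl (i, α))

def yOf (u : V n m → K) (i : Fin m) : MvPowerSeries (Fin n) K :=
  fun α => u (Sum.inl (i, α))

lemma coeff_yOf (u : V n m → K) (i : Fin m) (α : Fin n →₀ ℕ) :
    MvPowerSeries.coeff α (yOf u i) = u (Sum.inl (i, α)) := rfl

def Fgen (f : Fin r → MvPolynomial (Fin m) (MvPowerSeries (Fin n) K)) (k : Fin r) :
    MvPowerSeries (Fin n) (MvPolynomial (V n m) K) :=
  MvPolynomial.eval₂ (MvPowerSeries.map (MvPolynomial.C)) (genY K n m) (f k)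

lemma map_eval_Fgen (u : V n m → K) (f : Fin r → MvPolynomial (Fin m) (MvPowerSeries (Fin n) K))
    (k : Fin r) :
    MvPowerSeries.map (MvPolynomial.eval u) (Fgen f k)
      = MvPolynomial.eval (yOf u) (f k) := by
  unfold Fgen
  rw [eval₂_comp_left]
  have h0 : (MvPolynomial.eval u).comp (MvPolynomial.C (σ := V n m)) = RingHom.id K := by
    ext a; simp
  have h1 : (MvPowerSeries.map (σ := Fin n) (MvPolynomial.eval u)).comp
      (MvPowerSeries.map (σ := Fin n) (MvPolynomial.C)) = RingHom.id _ := by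
    rw [← MvPowerSeries.map_comp, h0, MvPowerSeries.map_id]
  have h2 : (MvPowerSeries.map (MvPolynomial.eval u)) ∘ (genY K n m) = yOf u := by
    funext i
    apply MvPowerSeries.ext
    intro α
    rw [Function.comp_apply, MvPowerSeries.coeff_map]
    simp [genY, yOf, MvPowerSeries.coeff_apply]
  rw [h1, h2, eval₂_id]

lemma eval_coeff_Fgen (u : V n m → K) (f : Fin r → MvPolynomial (Fin m) (MvPowerSeries (Fin n) K))
    (k : Fin r) (α : Fin n →₀ ℕ) :
    MvPolynomial.eval u (MvPowerSeries.coeff α (Fgen f k))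
      = MvPowerSeries.coeff α (MvPolynomial.eval (yOf u) (f k)) := by
  rw [← map_eval_Fgen u f k, MvPowerSeries.coeff_map]

open Classical in
/-- The countable system of polynomial equations encoding the constrained solution. -/
def Sys (J : Fin m → Set (Fin n)) (f : Fin r → MvPolynomial (Fin m) (MvPowerSeries (Fin n) K))
    (c : Fin m → ℕ) : E n m r → MvPolynomial (V n m) K
  | none => 0
  | some (Sum.inl (i, α)) => if ¬ (↑α.support ⊆ J i) then X (Sum.inl (i, α)) else 0
  | some (Sum.inr (Sum.inl (i, α))) => if (∑ j, α j) < c i then X (Sum.inl (i, α)) else 0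
  | some (Sum.inr (Sum.inr (Sum.inl i))) =>
      (∑ α ∈ degSet n (c i), X (Sum.inr (i, α)) * X (Sum.inl (i, α))) - 1
  | some (Sum.inr (Sum.inr (Sum.inr (k, α)))) => MvPowerSeries.coeff α (Fgen f k)

/-- Degree weight of an equation index. -/
def wt : E n m r → ℕ
  | some (Sum.inr (Sum.inr (Sum.inr (_, α)))) => ∑ j, α j
  | _ => 0

/-- From a full solution of the system one gets an exact constrained solution. -/
lemma solution_of_sys (J : Fin m → Set (Fin n))
    (f : Fin r → MvPolynomial (Fin m) (MvPowerSeries (Fin n) K)) (c : Fin m → ℕ)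
    (u : V n m → K) (hu : ∀ e, MvPolynomial.eval u (Sys J f c e) = 0) :
    (∀ i, DependsOnVars (J i) (yOf u i)) ∧
      (∀ k, MvPolynomial.eval (yOf u) (f k) = 0) ∧ (∀ i, OrdEq (yOf u i) (c i)) := by
  refine ⟨?_, ?_, ?_⟩
  · intro i α hα
    have h := hu (some (Sum.inl (i, α)))
    rw [Sys, if_pos hα] at h
    rw [coeff_yOf]
    simpa using h
  · intro k
    apply MvPowerSeries.ext
    intro α
    have h := hu (some (Sum.inr (Sum.inr (Sum.inr (k, α)))))
    rw [Sys] at h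
    rw [map_zero, ← eval_coeff_Fgen u f k α]
    exact h
  · intro i
    have hC := hu (some (Sum.inr (Sum.inr (Sum.inl i))))
    rw [Sys] at hC
    rw [map_sub, map_sum, map_one, sub_eq_zero] at hC
    constructor
    · intro α hα
      have h := hu (some (Sum.inr (Sum.inl (i, α))))
      rw [Sys, if_pos hα] at h
      rw [coeff_yOf]
      simpa using h
    · intro hOG
      have hz : ∀ α ∈ degSet n (c i),
          MvPolynomial.eval u (X (Sum.inr (i, α)) * X (Sum.inl (i, α))) = 0 := by
        intro α hα
        have h1 : u (Sum.inl (i, α)) = 0 := by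
          have := hOG α (by rw [mem_degSet.mp hα]; omega)
          rwa [coeff_yOf] at this
        simp [h1]
      rw [Finset.sum_eq_zero hz] at hC
      exact zero_ne_one hC

/-- From an approximate constrained solution one gets a solution of the equations of
small weight. -/
lemma approx_solves (J : Fin m → Set (Fin n))
    (f : Fin r → MvPolynomial (Fin m) (MvPowerSeries (Fin n) K)) (c : Fin m → ℕ) (N : ℕ)
    (y' : Fin m → MvPowerSeries (Fin n) K)
    (hdep : ∀ i, DependsOnVars (J i) (y' i)) (hord : ∀ i, OrdEq (y' i) (c i))
    (happ : ∀ k, OrdGE (MvPolynomial.eval y' (f k)) N) :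
    ∃ u : V n m → K, ∀ e : E n m r, wt e < N → MvPolynomial.eval u (Sys J f c e) = 0 := by
  classical
  have hA : ∀ i, ∃ α : Fin n →₀ ℕ, (∑ j, α j) = c i ∧ MvPowerSeries.coeff α (y' i) ≠ 0 := by
    intro i
    have h2 := (hord i).2
    unfold OrdGE at h2
    push_neg at h2
    obtain ⟨α, hα1, hα2⟩ := h2
    refine ⟨α, ?_, hα2⟩
    have hge : ¬ (∑ j, α j) < c i := fun hlt => hα2 ((hord i).1 α hlt)
    omega
  choose A hA1 hA2 using hA
  refine ⟨fun v => match v with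
    | Sum.inl (i, α) => MvPowerSeries.coeff α (y' i)
    | Sum.inr (i, α) => if α = A i then (MvPowerSeries.coeff (A i) (y' i))⁻¹ else 0,
    ?_⟩
  set u' : V n m → K := fun v => match v with
    | Sum.inl (i, α) => MvPowerSeries.coeff α (y' i)
    | Sum.inr (i, α) => if α = A i then (MvPowerSeries.coeff (A i) (y' i))⁻¹ else 0
    with hu'
  have hul : ∀ i α, u' (Sum.inl (i, α)) = MvPowerSeries.coeff α (y' i) := fun _ _ => rfl
  have hur : ∀ i α, u' (Sum.inr (i, α))
      = if α = A i then (MvPowerSeries.coeff (A i) (y' i))⁻¹ else 0 := fun _ _ => rfl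
  have hy : yOf u' = y' := by
    funext i
    apply MvPowerSeries.ext
    intro α
    rw [coeff_yOf, hul]
  rintro (_ | (⟨i, α⟩ | ⟨i, α⟩ | i | ⟨k, α⟩)) hwt
  · simp [Sys]
  · rw [Sys]
    split_ifs with h
    · simp
    · rw [eval_X, hul]
      exact hdep i α h
  · rw [Sys]
    split_ifs with h
    · rw [eval_X, hul]
      exact (hord i).1 α h
    · simp
  · rw [Sys, map_sub, map_sum, map_one, sub_eq_zero]
    rw [Finset.sum_eq_single (A i)]
    · rw [map_mul, eval_X, eval_X, hul, hur, if_pos rfl]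
      exact inv_mul_cancel₀ (hA2 i)
    · intro β _ hβ
      rw [map_mul, eval_X, hur, if_neg hβ, zero_mul]
    · intro hmem
      exact absurd (mem_degSet.mpr (hA1 i)) hmem
  · rw [Sys, eval_coeff_Fgen u' f k α, hy]
    exact happ k α (by simpa [wt] using hwt)

end SAAux
end SAAux

/-- Strong approximation with constraints over an ℵ₀-complete field: there is a function
`ν : ℕ^m → ℕ` such that any approximate solution modulo `(x)^{ν(c)}` with constraints and
prescribed orders `c` gives rise to an exact solution with the same constraints and orders. -/
theorem strong_approximation_with_constraints {K : Type*} [Field K] (hK : Aleph0Complete K)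
    (n m r : ℕ) (f : Fin r → MvPolynomial (Fin m) (MvPowerSeries (Fin n) K))
    (J : Fin m → Set (Fin n)) :
    ∃ ν : (Fin m → ℕ) → ℕ, ∀ (c : Fin m → ℕ) (y' : Fin m → MvPowerSeries (Fin n) K),
      (∀ i, DependsOnVars (J i) (y' i)) →
      (∀ i, OrdEq (y' i) (c i)) →
      (∀ k, OrdGE (MvPolynomial.eval y' (f k)) (ν c)) →
      ∃ y : Fin m → MvPowerSeries (Fin n) K,
        (∀ i, DependsOnVars (J i) (y i)) ∧
        (∀ k, MvPolynomial.eval y (f k) = 0) ∧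
        (∀ i, OrdEq (y i) (c i)) := by
  classical
  have key : ∀ c : Fin m → ℕ, ∃ N : ℕ, ∀ y' : Fin m → MvPowerSeries (Fin n) K,
      (∀ i, DependsOnVars (J i) (y' i)) → (∀ i, OrdEq (y' i) (c i)) →
      (∀ k, OrdGE (MvPolynomial.eval y' (f k)) N) →
      ∃ y : Fin m → MvPowerSeries (Fin n) K,
        (∀ i, DependsOnVars (J i) (y i)) ∧ (∀ k, MvPolynomial.eval y (f k) = 0) ∧
        (∀ i, OrdEq (y i) (c i)) := by
    intro c
    by_cases hex : ∃ u : SAAux.V n m → K, ∀ e, MvPolynomial.eval u (SAAux.Sys J f c e) = 0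
    · obtain ⟨u, hu⟩ := hex
      obtain ⟨h1, h2, h3⟩ := SAAux.solution_of_sys J f c u hu
      exact ⟨0, fun y' _ _ _ => ⟨SAAux.yOf u, h1, h2, h3⟩⟩
    · obtain ⟨inj⟩ := nonempty_embedding_nat (SAAux.V n m)
      obtain ⟨σ, hσ⟩ := exists_surjective_nat (SAAux.E n m r)
      set S : ℕ → MvPolynomial ℕ K :=
        fun N => MvPolynomial.rename inj (SAAux.Sys J f c (σ N)) with hS
      have hnofull : ¬ ∃ x : ℕ → K, ∀ N, MvPolynomial.eval x (S N) = 0 := by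
        rintro ⟨x, hx⟩
        refine hex ⟨x ∘ inj, fun e => ?_⟩
        obtain ⟨N, rfl⟩ := hσ e
        have hxN := hx N
        simp only [hS] at hxN
        rwa [MvPolynomial.eval_rename] at hxN
      have hT : ∃ T : Finset ℕ, ¬ ∃ x : ℕ → K, ∀ N ∈ T, MvPolynomial.eval x (S N) = 0 := by
        by_contra hc
        push_neg at hc
        exact hnofull (hK S hc)
      obtain ⟨T, hT⟩ := hT
      refine ⟨1 + T.sup (fun N => SAAux.wt (σ N)), fun y' hdep hord happ => ?_⟩
      exfalso
      obtain ⟨u, hu⟩ := SAAux.approx_solves J f c _ y' hdep hord happ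
      refine hT ⟨Function.extend inj u (fun _ => 0), fun N hN => ?_⟩
      simp only [hS]
      rw [MvPolynomial.eval_rename]
      have hcomp : (Function.extend inj u (fun _ => 0)) ∘ inj = u := by
        funext v; exact Function.Injective.extend_apply inj.injective _ _ v
      rw [hcomp]
      refine hu (σ N) ?_
      calc SAAux.wt (σ N) ≤ T.sup (fun N => SAAux.wt (σ N)) := Finset.le_sup (f := fun N => SAAux.wt (σ N)) hN
      _ < 1 + T.sup (fun N => SAAux.wt (σ N)) := by omega
  choose ν hν using key
  exact ⟨ν, hν⟩
end

section
/- Let K be a field, K* an ultrapower of K over ℕ, and x = (x₁,...,xₙ). Then the quotient of (K[[x]])* (the ultrapower of K[[x]]) by the ideal ⋂_q (x)^q(K[[x]])* embeds naturally into K*[[x]], and an element of (K[[x]])* whose residue corresponds to a power series ȳ ∈ K*[[x]] satisfies f(ȳ) = 0 in K*[[x]] whenever f(y*) ∈ ⋂_q (x)^q (K[[x]])* for the original element y* and a polynomial system f over K[[x]]. -/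
/-- The set of exponents of total degree `< c` is finite. -/
lemma finite_deg_lt (n c : ℕ) : {α : Fin n →₀ ℕ | (∑ j, α j) < c}.Finite := by
  have hIcc : (Set.Icc (0 : Fin n → ℕ) (fun _ => c)).Finite := Set.finite_Icc _ _
  have hpre : ((fun α : Fin n →₀ ℕ => (α : Fin n → ℕ)) ⁻¹'
      (Set.Icc (0 : Fin n → ℕ) (fun _ => c))).Finite :=
    hIcc.preimage (Set.injOn_of_injective (DFunLike.coe_injective))
  refine hpre.subset ?_
  intro α hα
  simp only [Set.mem_preimage, Set.mem_Icc]
  refine ⟨fun j => Nat.zero_le _, fun j => ?_⟩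
  calc α j ≤ ∑ i, α i := Finset.single_le_sum (fun i _ => Nat.zero_le _) (Finset.mem_univ j)
  _ ≤ c := le_of_lt hα

/-- Coefficientwise application of `π`, as a function. -/
noncomputable def PhiFun {K L : Type*} [Field K] [Field L] (π : (ℕ → K) →+* L) (n : ℕ)
    (g : ℕ → MvPowerSeries (Fin n) K) : MvPowerSeries (Fin n) L :=
  fun α => π fun q => MvPowerSeries.coeff α (g q)

lemma coeff_PhiFun {K L : Type*} [Field K] [Field L] (π : (ℕ → K) →+* L) (n : ℕ)
    (g : ℕ → MvPowerSeries (Fin n) K) (α : Fin n →₀ ℕ) :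
    MvPowerSeries.coeff α (PhiFun π n g) = π fun q => MvPowerSeries.coeff α (g q) := rfl

/-- Coefficientwise application of `π` is a ring homomorphism. -/
noncomputable def PhiAux {K L : Type*} [Field K] [Field L] (π : (ℕ → K) →+* L) (n : ℕ) :
    (ℕ → MvPowerSeries (Fin n) K) →+* MvPowerSeries (Fin n) L where
  toFun := PhiFun π n
  map_one' := by
    classical
    ext α
    show MvPowerSeries.coeff α (PhiFun π n 1) = MvPowerSeries.coeff α 1
    rw [coeff_PhiFun, MvPowerSeries.coeff_one]
    simp only [Pi.one_apply, MvPowerSeries.coeff_one]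
    split_ifs with h
    · exact map_one π
    · exact map_zero π
  map_mul' g h := by
    classical
    ext α
    show MvPowerSeries.coeff α (PhiFun π n (g * h)) =
      MvPowerSeries.coeff α (PhiFun π n g * PhiFun π n h)
    rw [coeff_PhiFun, MvPowerSeries.coeff_mul]
    simp only [Pi.mul_apply]
    have : (fun q => MvPowerSeries.coeff α (g q * h q)) =
        ∑ p ∈ Finset.HasAntidiagonal.antidiagonal α,
          (fun q => MvPowerSeries.coeff p.1 (g q)) *
          (fun q => MvPowerSeries.coeff p.2 (h q)) := by
      funext q
      simp [MvPowerSeries.coeff_mul]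
    rw [this, map_sum]
    exact Finset.sum_congr rfl fun p _ => by rw [map_mul]; rfl
  map_zero' := by
    ext α
    show MvPowerSeries.coeff α (PhiFun π n 0) = MvPowerSeries.coeff α 0
    rw [coeff_PhiFun, MvPowerSeries.coeff_zero]
    exact map_zero π
  map_add' g h := by
    ext α
    show MvPowerSeries.coeff α (PhiFun π n (g + h)) =
      MvPowerSeries.coeff α (PhiFun π n g + PhiFun π n h)
    rw [coeff_PhiFun, map_add, coeff_PhiFun, coeff_PhiFun]
    simp only [Pi.add_apply]
    have : (fun q => MvPowerSeries.coeff α (g q + h q)) =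
        (fun q => MvPowerSeries.coeff α (g q)) + fun q => MvPowerSeries.coeff α (h q) := by
      funext q; simp
    rw [this, map_add]

/-- The ultrapower of `K[[x]]` modulo `⋂_q (x)^q (K[[x]])*` embeds into `K*[[x]]`: there is a
ring homomorphism `Φ` from sequences of power series to power series over the ultrapower
`L = K*` (presented by the surjection `π : (ℕ → K) →+* L` with the indicated kernel),
given coefficientwise by `π`, whose kernel is exactly the set of sequences lying in
`⋂_q (x)^q` along the ultrafilter; moreover if a polynomial system `f` over `K[[x]]`
satisfies `f(y*) ∈ ⋂_q (x)^q (K[[x]])*` then the residue `ȳ` satisfies `f(ȳ) = 0` in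
`K*[[x]]`. -/
theorem ultrapower_powerSeries_residue {K L : Type*} [Field K] [Field L]
    (F : Ultrafilter ℕ) (π : (ℕ → K) →+* L) (hsurj : Function.Surjective π)
    (hker : ∀ a : ℕ → K, π a = 0 ↔ {q | a q = 0} ∈ F) (n : ℕ) :
    ∃ Φ : (ℕ → MvPowerSeries (Fin n) K) →+* MvPowerSeries (Fin n) L,
      (∀ (g : ℕ → MvPowerSeries (Fin n) K) (α : Fin n →₀ ℕ),
        MvPowerSeries.coeff α (Φ g) = π (fun q => MvPowerSeries.coeff α (g q))) ∧
      (∀ g : ℕ → MvPowerSeries (Fin n) K,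
        Φ g = 0 ↔ ∀ c : ℕ, {q | OrdGE (g q) c} ∈ F) ∧
      (∀ (m r : ℕ) (f : Fin r → MvPolynomial (Fin m) (MvPowerSeries (Fin n) K))
        (y : Fin m → ℕ → MvPowerSeries (Fin n) K),
        (∀ (k : Fin r) (c : ℕ),
          {q | OrdGE (MvPolynomial.eval (fun i => y i q) (f k)) c} ∈ F) →
        ∀ k, MvPolynomial.eval (fun i => Φ (y i))
          (MvPolynomial.map (Φ.comp (Pi.constRingHom ℕ (MvPowerSeries (Fin n) K)))
            (f k)) = 0) := by
  refine ⟨PhiAux π n, fun g α => rfl, ?_, ?_⟩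
  · -- kernel characterization
    intro g
    constructor
    · intro h0 c
      have hS : ∀ α : Fin n →₀ ℕ, {q | MvPowerSeries.coeff α (g q) = 0} ∈ F := by
        intro α
        rw [← hker]
        have := congrArg (MvPowerSeries.coeff α) h0
        exact this
      have hfin := (finite_deg_lt n c)
      have hmem : (⋂ α ∈ {α : Fin n →₀ ℕ | (∑ j, α j) < c},
          {q | MvPowerSeries.coeff α (g q) = 0}) ∈ F :=
        (Filter.biInter_mem hfin).2 fun α _ => hS α
      refine Filter.mem_of_superset hmem ?_
      intro q hq α hα
      exact Set.mem_iInter₂.mp hq α hα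
    · intro h
      ext α
      rw [MvPowerSeries.coeff_apply, MvPowerSeries.coeff_zero]
      show (π fun q => MvPowerSeries.coeff α (g q)) = 0
      rw [hker]
      refine Filter.mem_of_superset (h (∑ j, α j + 1)) ?_
      intro q hq
      exact hq α (Nat.lt_succ_self _)
  · -- residue satisfies the equations
    intro m r f y hy k
    set Φ := PhiAux π n
    set C' := Pi.constRingHom ℕ (MvPowerSeries (Fin n) K)
    have key : (fun q => MvPolynomial.eval (fun i => y i q) (f k)) =
        MvPolynomial.eval₂ C' (fun i => y i) (f k) := by
      funext q
      have hcomp : (Pi.evalRingHom (fun _ => MvPowerSeries (Fin n) K) q).comp C' =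
          RingHom.id (MvPowerSeries (Fin n) K) := RingHom.ext fun s => rfl
      have h3 := MvPolynomial.eval₂_comp_left
        (Pi.evalRingHom (fun _ => MvPowerSeries (Fin n) K) q) C' (fun i => y i) (f k)
      rw [hcomp, MvPolynomial.eval₂_id] at h3
      exact h3.symm
    have hΦ0 : Φ (fun q => MvPolynomial.eval (fun i => y i q) (f k)) = 0 := by
      -- use kernel characterization
      ext α
      rw [MvPowerSeries.coeff_apply, MvPowerSeries.coeff_zero]
      show (π fun q => MvPowerSeries.coeff α (MvPolynomial.eval (fun i => y i q) (f k))) = 0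
      rw [hker]
      refine Filter.mem_of_superset (hy k (∑ j, α j + 1)) ?_
      intro q hq
      exact hq α (Nat.lt_succ_self _)
    have := MvPolynomial.eval₂_comp_left Φ C' (fun i => y i) (f k)
    rw [key, this] at hΦ0
    rw [MvPolynomial.eval_map]
    exact hΦ0
end

section
/- Let K be an uncountable algebraically closed field and (C_N)_{N∈ℕ} a decreasing sequence of nonempty constructible subsets of K^k. Then the intersection ⋂_{N∈ℕ} C_N is nonempty. -/
/-- A Zariski-closed subset of `K^k`: the common zero locus of a set of polynomials. -/
def ZClosed {K : Type*} [Field K] {k : ℕ} (S : Set (Fin k → K)) : Prop :=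
  ∃ T : Set (MvPolynomial (Fin k) K), S = {x | ∀ p ∈ T, MvPolynomial.eval x p = 0}

/-- A constructible subset of `K^k`: a finite union of differences of Zariski-closed sets. -/
def ZConstructible {K : Type*} [Field K] {k : ℕ} (S : Set (Fin k → K)) : Prop :=
  ∃ (r : ℕ) (X Y : Fin r → Set (Fin k → K)),
    (∀ i, ZClosed (X i) ∧ ZClosed (Y i)) ∧ S = ⋃ i, X i \ Y i

open MvPolynomial Filter

/-- The closure of a countable set in a monoid is countable. -/
lemma countable_submonoid_closure {M : Type*} [Monoid M] {s : Set M} (hs : s.Countable) :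
    ((Submonoid.closure s : Submonoid M) : Set M).Countable := by
  rw [Submonoid.closure_eq_image_prod]
  have : Countable ↥s := hs.to_subtype
  have h : { l : List M | ∀ x ∈ l, x ∈ s } ⊆
      Set.range (fun l : List ↥s => l.map Subtype.val) := by
    intro l hl
    exact ⟨List.pmap Subtype.mk l hl, by simp [List.map_pmap]⟩
  exact ((Set.countable_range _).mono h).image _

/-- If `L` is a field extension of an uncountable algebraically closed field `K` which is
countably generated as a `K`-algebra, then `algebraMap K L` is surjective. -/
lemma algebraMap_surjective_of_countable_gen {K L : Type u} [Field K] [IsAlgClosed K]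
    [Uncountable K] [Field L] [Algebra K L] {s : Set L} (hs : s.Countable)
    (hgen : Algebra.adjoin K s = ⊤) : Function.Surjective (algebraMap K L) := by
  have hrank : Module.rank K L ≤ Cardinal.aleph0 := by
    have h1 : ((Submonoid.closure s : Submonoid L) : Set L).Countable :=
      countable_submonoid_closure hs
    have h2 : Submodule.span K ((Submonoid.closure s : Submonoid L) : Set L) = ⊤ := by
      rw [← Algebra.adjoin_eq_span, hgen, Algebra.top_toSubmodule]
    have h3 := rank_span_le (R := K) ((Submonoid.closure s : Submonoid L) : Set L)
    rw [h2, rank_top] at h3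
    refine h3.trans ?_
    have := h1.to_subtype
    exact Cardinal.mk_le_aleph0
  have hint : Algebra.IsIntegral K L := by
    refine ⟨fun t => ?_⟩
    by_contra hct
    have htr : Transcendental K t := fun h => hct h.isIntegral
    have hli := htr.linearIndependent_sub_inv
    have hc := hli.cardinal_le_rank
    exact absurd (hc.trans hrank) (not_le.mpr (Cardinal.aleph0_lt_mk (α := K)))
  exact IsAlgClosed.algebraMap_bijective_of_isIntegral.2

/-- Over an uncountable algebraically closed field, a decreasing sequence of nonempty
constructible subsets of `K^k` has nonempty intersection. -/
theorem decreasing_constructible_inter_nonempty {K : Type*} [Field K] [IsAlgClosed K]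
    [Uncountable K] {k : ℕ} (C : ℕ → Set (Fin k → K))
    (hcon : ∀ N, ZConstructible (C N)) (hne : ∀ N, (C N).Nonempty)
    (hdec : ∀ N, C (N + 1) ⊆ C N) :
    (⋂ N, C N).Nonempty := by
  classical
  choose x hx using hne
  have hanti : Antitone C := antitone_nat_of_succ_le fun n => hdec n
  set U : Ultrafilter ℕ := Filter.hyperfilter ℕ with hU
  set R := MvPolynomial (Fin k) K with hR
  set Φ : R →+* Filter.Germ (U : Filter ℕ) K :=
    (Filter.Germ.coeRingHom _).comp (Pi.ringHom fun M => (MvPolynomial.eval (x M) : R →+* K))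
    with hΦ
  have key0 : ∀ f : R, (∀ᶠ M in (U : Filter ℕ), MvPolynomial.eval (x M) f = 0) → Φ f = 0 := by
    intro f h
    show ((fun M => MvPolynomial.eval (x M) f : ℕ → K) : Filter.Germ (U : Filter ℕ) K) = 0
    rw [← Filter.Germ.coe_zero (l := (U : Filter ℕ))]
    exact Filter.Germ.coe_eq.mpr h
  have key1 : ∀ f : R, Φ f = 0 → (∀ᶠ M in (U : Filter ℕ), MvPolynomial.eval (x M) f = 0) := by
    intro f h
    have h' : ((fun M => MvPolynomial.eval (x M) f : ℕ → K) : Filter.Germ (U : Filter ℕ) K)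
        = ((0 : ℕ → K) : Filter.Germ (U : Filter ℕ) K) := by
      rw [Filter.Germ.coe_zero]; exact h
    exact Filter.Germ.coe_eq.mp h'
  -- Step 1: extract, for each `N`, a closed-set datum and a single inequality
  have hdata : ∀ N, ∃ (T : Set R) (g : R), (∀ f ∈ T, Φ f = 0) ∧ Φ g ≠ 0 ∧
      ∀ z : Fin k → K, (∀ f ∈ T, MvPolynomial.eval z f = 0) →
        MvPolynomial.eval z g ≠ 0 → z ∈ C N := by
    intro N
    obtain ⟨r, X, Y, hXY, hC⟩ := hcon N
    have hSN : {M | x M ∈ C N} ∈ (U : Filter ℕ) := by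
      have hfin : ({M : ℕ | N ≤ M}ᶜ).Finite := by
        have : {M : ℕ | N ≤ M}ᶜ = Set.Iio N := by ext M; simp [not_le]
        rw [this]; exact Set.finite_Iio N
      have hcof : {M : ℕ | N ≤ M} ∈ (U : Filter ℕ) :=
        Ultrafilter.mem_coe.mpr (Filter.mem_hyperfilter_of_finite_compl hfin)
      exact Filter.mem_of_superset hcof (fun M hM => hanti hM (hx M))
    have h1 : (⋃ i ∈ (Set.univ : Set (Fin r)), {M | x M ∈ X i \ Y i}) ∈ U := by
      rw [← Ultrafilter.mem_coe]
      refine Filter.mem_of_superset hSN ?_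
      intro M hM
      rw [hC] at hM
      simpa using hM
    obtain ⟨i, -, hTi⟩ := (Ultrafilter.finite_biUnion_mem_iff Set.finite_univ).mp h1
    obtain ⟨Tx, hTx⟩ := (hXY i).1
    obtain ⟨Ty, hTy⟩ := (hXY i).2
    obtain ⟨G, hG⟩ := IsNoetherian.noetherian (Ideal.span Ty)
    have hker : ∀ (S : Set R) (z : Fin k → K),
        (∀ p ∈ S, MvPolynomial.eval z p = 0) ↔
          Ideal.span S ≤ RingHom.ker (MvPolynomial.eval z) := by
      intro S z
      rw [Ideal.span_le]
      constructor
      · intro h p hp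
        exact RingHom.mem_ker.mpr (h p hp)
      · intro h p hp
        exact RingHom.mem_ker.mp (h hp)
    have hYiff : ∀ z : Fin k → K, z ∈ Y i ↔ ∀ p ∈ (↑G : Set R), MvPolynomial.eval z p = 0 := by
      intro z
      rw [hTy]
      simp only [Set.mem_setOf_eq]
      rw [hker Ty z, hker (↑G) z,
        show Ideal.span ((↑G : Set R)) = Ideal.span Ty from hG]
    have hcover : {M | x M ∈ X i \ Y i} ⊆
        ⋃ p ∈ (↑G : Set R), {M | MvPolynomial.eval (x M) p ≠ 0} := by
      intro M hM
      have h2 := hM.2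
      rw [hYiff] at h2
      push_neg at h2
      obtain ⟨p, hp, hne'⟩ := h2
      exact Set.mem_biUnion hp hne'
    have h3 : (⋃ p ∈ (↑G : Set R), {M | MvPolynomial.eval (x M) p ≠ 0}) ∈ U := by
      rw [← Ultrafilter.mem_coe]
      exact Filter.mem_of_superset (Ultrafilter.mem_coe.mpr hTi) hcover
    obtain ⟨q, hqG, hq⟩ := (Ultrafilter.finite_biUnion_mem_iff G.finite_toSet).mp h3
    have hΦq : Φ q ≠ 0 := by
      intro h0
      have h1' := key1 q h0
      have h2' : ∀ᶠ M in (U : Filter ℕ), MvPolynomial.eval (x M) q ≠ 0 :=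
        Filter.eventually_iff.mpr (Ultrafilter.mem_coe.mpr hq)
      obtain ⟨M, hM1, hM2⟩ := (h1'.and h2').exists
      exact hM2 hM1
    refine ⟨Tx, q, ?_, hΦq, ?_⟩
    · intro f hf
      apply key0
      refine Filter.Eventually.mono (Filter.eventually_iff.mpr (Ultrafilter.mem_coe.mpr hTi)) ?_
      intro M hM
      have hXM : x M ∈ X i := hM.1
      rw [hTx] at hXM
      exact hXM f hf
    · intro z hz hq0
      have hzX : z ∈ X i := by rw [hTx]; exact hz
      have hzY : z ∉ Y i := fun hzy => hq0 ((hYiff z).mp hzy q hqG)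
      rw [hC]
      exact Set.mem_iUnion.mpr ⟨i, hzX, hzY⟩
  choose T g hT hg hpt using hdata
  -- Step 2: build a point of `K^k` from the germ data
  letI : Algebra K (Filter.Germ (U : Filter ℕ) K) :=
    RingHom.toAlgebra ((Filter.Germ.coeRingHom _).comp (Pi.constRingHom ℕ K))
  let ΦA : R →ₐ[K] Filter.Germ (U : Filter ℕ) K :=
    { Φ with
      commutes' := by
        intro c
        show Φ (algebraMap K R c) = _
        rw [MvPolynomial.algebraMap_eq]
        show ((fun M => MvPolynomial.eval (x M) (MvPolynomial.C c) : ℕ → K) :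
            Filter.Germ (U : Filter ℕ) K) = ((fun _ => c : ℕ → K) : Filter.Germ (U : Filter ℕ) K)
        exact Filter.Germ.coe_eq.mpr (Filter.Eventually.of_forall fun M => by simp) }
  let xg : Fin k → Filter.Germ (U : Filter ℕ) K := fun j => ΦA (MvPolynomial.X j)
  let sgen : Set (Filter.Germ (U : Filter ℕ) K) :=
    Set.range xg ∪ Set.range (fun N => (ΦA (g N))⁻¹)
  let B : Subalgebra K (Filter.Germ (U : Filter ℕ) K) := Algebra.adjoin K sgen
  have hB : ∀ f : R, ΦA f ∈ B := by
    intro f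
    have h1 : ΦA f ∈ Algebra.adjoin K (Set.range xg) := by
      have : ΦA = MvPolynomial.aeval xg := MvPolynomial.aeval_unique ΦA
      rw [this, Algebra.adjoin_range_eq_range_aeval]
      exact ⟨f, rfl⟩
    exact Algebra.adjoin_mono Set.subset_union_left h1
  have hBnt : Nontrivial B :=
    nontrivial_of_ne 0 1 fun h => zero_ne_one (congrArg Subtype.val h)
  obtain ⟨m, hm⟩ := Ideal.exists_maximal B
  letI := hm
  letI : Field (B ⧸ m) := Ideal.Quotient.field m
  -- countably generated
  have hsgen_count : sgen.Countable :=
    (Set.countable_range xg).union (Set.countable_range _)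
  have hgenB : Algebra.adjoin K (((↑) : B → Filter.Germ (U : Filter ℕ) K) ⁻¹' sgen) = ⊤ :=
    Algebra.adjoin_adjoin_coe_preimage
  let mk : B →ₐ[K] B ⧸ m := Ideal.Quotient.mkₐ K m
  have hgenL : Algebra.adjoin K
      (mk '' (((↑) : B → Filter.Germ (U : Filter ℕ) K) ⁻¹' sgen)) = ⊤ := by
    rw [← AlgHom.map_adjoin, hgenB, Algebra.map_top, AlgHom.range_eq_top]
    exact Ideal.Quotient.mkₐ_surjective K m
  have hcount : (mk '' (((↑) : B → Filter.Germ (U : Filter ℕ) K) ⁻¹' sgen)).Countable :=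
    (hsgen_count.preimage Subtype.coe_injective).image _
  have hsurj : Function.Surjective (algebraMap K (B ⧸ m)) :=
    algebraMap_surjective_of_countable_gen hcount hgenL
  have hinj : Function.Injective (algebraMap K (B ⧸ m)) := (algebraMap K (B ⧸ m)).injective
  let e : K ≃+* (B ⧸ m) := RingEquiv.ofBijective (algebraMap K (B ⧸ m)) ⟨hinj, hsurj⟩
  let χ : B →+* K := e.symm.toRingHom.comp (Ideal.Quotient.mk m)
  let χA : B →ₐ[K] K :=
    { χ with
      commutes' := by
        intro c
        show e.symm (Ideal.Quotient.mk m (algebraMap K B c)) = c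
        have h1 : Ideal.Quotient.mk m (algebraMap K B c) = algebraMap K (B ⧸ m) c := rfl
        rw [h1]
        exact e.symm_apply_apply c }
  let ΦB : R →ₐ[K] B := ΦA.codRestrict B hB
  let ψ : R →ₐ[K] K := χA.comp ΦB
  let y : Fin k → K := fun j => ψ (MvPolynomial.X j)
  have hψ : ∀ f : R, MvPolynomial.eval y f = ψ f := by
    intro f
    have h1 : ψ = MvPolynomial.aeval (ψ ∘ MvPolynomial.X) := MvPolynomial.aeval_unique ψ
    have h2 : (ψ ∘ MvPolynomial.X : Fin k → K) = y := rfl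
    rw [h1, h2]
    exact (congrFun (congrArg (fun (φ : R →+* K) => (φ : R → K))
      (MvPolynomial.coe_aeval_eq_eval y)) f).symm
  refine ⟨y, Set.mem_iInter.mpr fun N => ?_⟩
  refine hpt N y ?_ ?_
  · intro f hf
    rw [hψ f]
    show χA (ΦB f) = 0
    have h0 : ΦB f = 0 := Subtype.ext (by show ΦA f = 0; exact hT N f hf)
    rw [h0, map_zero]
  · rw [hψ (g N)]
    show χA (ΦB (g N)) ≠ 0
    have hainv : (ΦA (g N))⁻¹ ∈ B :=
      Algebra.subset_adjoin (Or.inr ⟨N, rfl⟩)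
    have hmul : ΦB (g N) * (⟨(ΦA (g N))⁻¹, hainv⟩ : B) = 1 := by
      refine Subtype.ext ?_
      show ΦA (g N) * (ΦA (g N))⁻¹ = 1
      exact mul_inv_cancel₀ (hg N)
    intro h0
    have h1 := congrArg χA hmul
    rw [map_mul, h0, zero_mul, map_one] at h1
    exact zero_ne_one h1
end
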